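/- With the hypotheses of the previous setup (Dω = Dη·DG, F(U) = aU + bG(U), H(U) = aη(U) + bω(U)), if additionally the Jacobian DF(U) = aI + b DG(U) is invertible at U, then the gradient of H with respect to F equals the gradient of η with respect to U; that is, ∇H(U)ᵀ (DF(U))^{-1} = ∇η(U)ᵀ. -/

import Mathlib

/-- Lemma 5.1 of the paper (single velocity / single direction):
with `Dω = Dη ∘ DG`, `F(U) = aU + bG(U)`, `H(U) = aη(U) + bω(U)`,
if the Jacobian `DF(U)` is invertible at `U` (realised as a continuous
linear equivalence `L`), then `∇H(U)ᵀ (DF(U))⁻¹ = ∇η(U)ᵀ`. -/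
theorem stmt_3 {p : ℕ} (η ω : (Fin p → ℝ) → ℝ)
    (G : (Fin p → ℝ) → (Fin p → ℝ)) (a b : ℝ)
    (hη : Differentiable ℝ η) (hω : Differentiable ℝ ω)
    (hG : Differentiable ℝ G)
    (hcompat : ∀ U, fderiv ℝ ω U = (fderiv ℝ η U).comp (fderiv ℝ G U))
    (F : (Fin p → ℝ) → (Fin p → ℝ)) (hF : F = fun U => a • U + b • G U)
    (H : (Fin p → ℝ) → ℝ) (hH : H = fun U => a * η U + b * ω U)
    (U : Fin p → ℝ) (L : (Fin p → ℝ) ≃L[ℝ] (Fin p → ℝ))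
    (hL : (L : (Fin p → ℝ) →L[ℝ] (Fin p → ℝ)) = fderiv ℝ F U) :
    (fderiv ℝ H U).comp (L.symm : (Fin p → ℝ) →L[ℝ] (Fin p → ℝ)) =
      fderiv ℝ η U := by
  have hFd : fderiv ℝ F U = a • ContinuousLinearMap.id ℝ _ + b • fderiv ℝ G U := by
    subst hF
    rw [fderiv_fun_add (differentiableAt_fun_id.fun_const_smul a) ((hG U).fun_const_smul b)]
    rw [fderiv_fun_const_smul differentiableAt_fun_id a, fderiv_fun_const_smul (hG U) b, fderiv_fun_id]
  have hHd : fderiv ℝ H U = (fderiv ℝ η U).comp (fderiv ℝ F U) := by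
    subst hH
    have : fderiv ℝ (fun U => a * η U + b * ω U) U
        = a • fderiv ℝ η U + b • fderiv ℝ ω U := by
      rw [fderiv_fun_add ((hη U).const_mul a) ((hω U).const_mul b),
        fderiv_const_mul (hη U) a, fderiv_const_mul (hω U) b]
    rw [this, hcompat U, hFd]
    ext v
    simp [mul_comm]
  rw [hHd, ← hL]
  ext v
  simp
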